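/- Suppose δ^D(x) ≠ 0 for every x ∈ 𝒳. Then the g-estimating function evaluated at the true conditional Wald estimand has conditional mean zero: for every x ∈ 𝒳, E[ ( Y − D · δ(X) ) · (2Z − 1) / f(Z | X) | X = x ] = 0. -/

import Mathlib

open MeasureTheory

/-- Conditional mean of `W` given event `A`: `E[W | A] = (∫_A W dμ) / μ(A)`. -/
noncomputable def condMean {Ω : Type*} [MeasurableSpace Ω] (μ : Measure Ω)
    (W : Ω → ℝ) (A : Set Ω) : ℝ :=
  (∫ ω in A, W ω ∂μ) / (μ A).toReal

/-- if `δ^D(x) ≠ 0` for every `x`, then the g-estimating function at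
the true conditional Wald estimand has conditional mean zero:
`E[ (Y − D δ(X)) (2Z − 1) / f(Z | X) | X = x ] = 0` for every `x`. -/
theorem g_estimating_function_unbiased
    {Ω : Type*} [MeasurableSpace Ω] (μ : Measure Ω) [IsProbabilityMeasure μ]
    {𝒳 : Type*} [Fintype 𝒳] [MeasurableSpace 𝒳] [MeasurableSingletonClass 𝒳]
    (Z D Y : Ω → ℝ) (X : Ω → 𝒳)
    (hZmeas : Measurable Z) (hDmeas : Measurable D) (hXmeas : Measurable X)
    (hZ01 : ∀ ω, Z ω = 0 ∨ Z ω = 1) (hD01 : ∀ ω, D ω = 0 ∨ D ω = 1)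
    (hYint : Integrable Y μ)
    -- positivity
    (hPos : ∀ (z : ℝ), (z = 0 ∨ z = 1) → ∀ (x : 𝒳),
      0 < μ ({ω | Z ω = z} ∩ {ω | X ω = x}))
    -- f(z | x) = μ(Z = z | X = x)
    (f : ℝ → 𝒳 → ℝ)
    (hf : ∀ (z : ℝ) (x : 𝒳),
      f z x = (μ ({ω | Z ω = z} ∩ {ω | X ω = x})).toReal / (μ {ω | X ω = x}).toReal)
    -- p_z^Y, p_z^D, δ^Y, δ^D, and the conditional Wald estimand δ
    (pY pD : ℝ → 𝒳 → ℝ)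
    (hpY : ∀ (z : ℝ) (x : 𝒳),
      pY z x = condMean μ Y ({ω | Z ω = z} ∩ {ω | X ω = x}))
    (hpD : ∀ (z : ℝ) (x : 𝒳),
      pD z x = condMean μ D ({ω | Z ω = z} ∩ {ω | X ω = x}))
    (δY δD δ : 𝒳 → ℝ)
    (hδY : ∀ x, δY x = pY 1 x - pY 0 x)
    (hδD : ∀ x, δD x = pD 1 x - pD 0 x)
    (hδDne : ∀ x, δD x ≠ 0)
    (hδ : ∀ x, δ x = δY x / δD x) :
    ∀ x : 𝒳,
      condMean μ (fun ω => (Y ω - D ω * δ (X ω)) * (2 * Z ω - 1) / f (Z ω) (X ω))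
          {ω | X ω = x}
        = 0 := by
  intro x
  set A1 : Set Ω := {ω | Z ω = 1} ∩ {ω | X ω = x} with hA1
  set A0 : Set Ω := {ω | Z ω = 0} ∩ {ω | X ω = x} with hA0
  have hA1m : MeasurableSet A1 := (hZmeas (measurableSet_singleton 1)).inter (hXmeas (measurableSet_singleton x))
  have hA0m : MeasurableSet A0 := (hZmeas (measurableSet_singleton 0)).inter (hXmeas (measurableSet_singleton x))
  have hdisj : Disjoint A0 A1 := by
    rw [Set.disjoint_left]
    rintro ω ⟨h0, _⟩ ⟨h1, _⟩
    simp only [Set.mem_setOf_eq] at h0 h1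
    norm_num [h0] at h1
  have hunion : {ω | X ω = x} = A0 ∪ A1 := by
    ext ω
    simp only [hA0, hA1, Set.mem_union, Set.mem_inter_iff, Set.mem_setOf_eq]
    rcases hZ01 ω with h | h <;> simp [h] <;> tauto
  -- measures
  have hμ1 : 0 < μ A1 := hPos 1 (Or.inr rfl) x
  have hμ0 : 0 < μ A0 := hPos 0 (Or.inl rfl) x
  have hfin1 : μ A1 ≠ ⊤ := measure_ne_top μ A1
  have hfin0 : μ A0 ≠ ⊤ := measure_ne_top μ A0
  set m1 := (μ A1).toReal with hm1def
  set m0 := (μ A0).toReal with hm0def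
  set mX := (μ {ω | X ω = x}).toReal with hmXdef
  have hm1 : 0 < m1 := ENNReal.toReal_pos hμ1.ne' hfin1
  have hm0 : 0 < m0 := ENNReal.toReal_pos hμ0.ne' hfin0
  have hmX : 0 < mX := by
    have : 0 < μ {ω | X ω = x} := lt_of_lt_of_le hμ1 (measure_mono (Set.inter_subset_right))
    exact ENNReal.toReal_pos this.ne' (measure_ne_top _ _)
  -- f values
  have hf1 : f 1 x = m1 / mX := hf 1 x
  have hf0 : f 0 x = m0 / mX := hf 0 x
  have hf1ne : f 1 x ≠ 0 := by rw [hf1]; positivity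
  have hf0ne : f 0 x ≠ 0 := by rw [hf0]; positivity
  -- integrability
  have hDint : Integrable D μ := by
    apply Integrable.mono' (integrable_const (1:ℝ)) hDmeas.aestronglyMeasurable
    filter_upwards with ω
    rcases hD01 ω with h | h <;> simp [h]
  have hint : Integrable (fun ω => Y ω - D ω * δ x) μ := hYint.sub (hDint.mul_const _)
  -- set integral of Y and D over Az
  have hIY1 : ∫ ω in A1, Y ω ∂μ = pY 1 x * m1 := by
    rw [hpY 1 x, condMean]; exact (div_mul_cancel₀ _ hm1.ne').symm
  have hIY0 : ∫ ω in A0, Y ω ∂μ = pY 0 x * m0 := by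
    rw [hpY 0 x, condMean]; exact (div_mul_cancel₀ _ hm0.ne').symm
  have hID1 : ∫ ω in A1, D ω ∂μ = pD 1 x * m1 := by
    rw [hpD 1 x, condMean]; exact (div_mul_cancel₀ _ hm1.ne').symm
  have hID0 : ∫ ω in A0, D ω ∂μ = pD 0 x * m0 := by
    rw [hpD 0 x, condMean]; exact (div_mul_cancel₀ _ hm0.ne').symm
  -- the integrand equals a nice function on A1 / A0
  have hcong1 : ∀ ω ∈ A1,
      (Y ω - D ω * δ (X ω)) * (2 * Z ω - 1) / f (Z ω) (X ω)
        = (Y ω - D ω * δ x) * (f 1 x)⁻¹ := by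
    rintro ω ⟨hz, hx⟩
    simp only [Set.mem_setOf_eq] at hz hx
    rw [hz, hx]; ring
  have hcong0 : ∀ ω ∈ A0,
      (Y ω - D ω * δ (X ω)) * (2 * Z ω - 1) / f (Z ω) (X ω)
        = -((Y ω - D ω * δ x) * (f 0 x)⁻¹) := by
    rintro ω ⟨hz, hx⟩
    simp only [Set.mem_setOf_eq] at hz hx
    rw [hz, hx]; ring
  have hI1 : ∫ ω in A1, (Y ω - D ω * δ (X ω)) * (2 * Z ω - 1) / f (Z ω) (X ω) ∂μ
      = (pY 1 x - δ x * pD 1 x) * m1 * (f 1 x)⁻¹ := by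
    rw [setIntegral_congr_fun hA1m hcong1, integral_mul_const,
      integral_sub (hYint.integrableOn) ((hDint.mul_const _).integrableOn),
      integral_mul_const, hIY1, hID1]
    ring
  have hI0 : ∫ ω in A0, (Y ω - D ω * δ (X ω)) * (2 * Z ω - 1) / f (Z ω) (X ω) ∂μ
      = -((pY 0 x - δ x * pD 0 x) * m0 * (f 0 x)⁻¹) := by
    rw [setIntegral_congr_fun hA0m hcong0, integral_neg, integral_mul_const,
      integral_sub (hYint.integrableOn) ((hDint.mul_const _).integrableOn),
      integral_mul_const, hIY0, hID0]
    ring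
  have hintOn1 : IntegrableOn (fun ω => (Y ω - D ω * δ (X ω)) * (2 * Z ω - 1) / f (Z ω) (X ω)) A1 μ := by
    apply (IntegrableOn.congr_fun _ (fun ω hω => (hcong1 ω hω).symm) hA1m)
    exact (hint.mul_const _).integrableOn
  have hintOn0 : IntegrableOn (fun ω => (Y ω - D ω * δ (X ω)) * (2 * Z ω - 1) / f (Z ω) (X ω)) A0 μ := by
    apply (IntegrableOn.congr_fun _ (fun ω hω => (hcong0 ω hω).symm) hA0m)
    exact ((hint.mul_const _).neg).integrableOn
  have hnum : ∫ ω in {ω | X ω = x}, (Y ω - D ω * δ (X ω)) * (2 * Z ω - 1) / f (Z ω) (X ω) ∂μ = 0 := by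
    rw [hunion, setIntegral_union hdisj hA1m hintOn0 hintOn1, hI0, hI1, hf1, hf0]
    have hδx : δ x * δD x = δY x := by
      rw [hδ x, div_mul_cancel₀ _ (hδDne x)]
    rw [hδY, hδD] at hδx
    field_simp
    linear_combination (-mX) * hδx
  rw [condMean, hnum, zero_div]
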